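/- Let n be a positive integer, w ∈ ℝ^n a probability vector (w_i ≥ 0, Σ_i w_i = 1), and let P_1, …, P_n be probability measures on ℝ each supported on [0, 1]. Let Q = Σ_{i=1}^n w_i P_i be the mixture measure, and let m_i = ∫ x dP_i(x) and m̄ = ∫ x dQ(x) = Σ_i w_i m_i. Then Σ_{i=1}^n w_i (m_i − m̄)² ≤ (1/2) Σ_{i=1}^n w_i KL(P_i ‖ Q), where KL denotes the Kullback–Leibler divergence and the right-hand side is interpreted in [0, ∞]. -/

import Mathlib

open MeasureTheory
open scoped ENNReal Classical BigOperators

open Real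

/-- The Kullback–Leibler divergence `KL(P ‖ Q) ∈ [0, ∞]`: it equals `∫ log (dP/dQ) dP` when
`P ≪ Q` (and this integral makes sense), and `∞` otherwise. -/
noncomputable def klDiv {Ω : Type*} [MeasurableSpace Ω] (P Q : Measure Ω) : ℝ≥0∞ :=
  if P ≪ Q ∧ Integrable (llr P Q) P then ENNReal.ofReal (∫ ω, llr P Q ω ∂P) else ⊤


lemma aux_sub_one_le_mul_log {x : ℝ} (hx : 0 ≤ x) : x - 1 ≤ x * Real.log x := by
  rcases eq_or_lt_of_le hx with h | h
  · simp [← h]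
  · have h1 : Real.log x⁻¹ ≤ x⁻¹ - 1 := Real.log_le_sub_one_of_pos (inv_pos.2 h)
    rw [Real.log_inv] at h1
    have h2 : 1 - x⁻¹ ≤ Real.log x := by linarith
    have := mul_le_mul_of_nonneg_left h2 hx
    have hxi : x * x⁻¹ = 1 := mul_inv_cancel₀ h.ne'
    nlinarith

lemma aux_phi_nonneg {x : ℝ} (hx : 0 ≤ x) : 0 ≤ x * Real.log x - x + 1 := by
  have := aux_sub_one_le_mul_log hx; linarith

private noncomputable def Gfun (x : ℝ) : ℝ := (x + 1) * Real.log x - 2 * (x - 1)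

private lemma Gfun_hasDeriv {x : ℝ} (hx : 0 < x) :
    HasDerivAt Gfun (Real.log x + (x + 1) * x⁻¹ - 2) x := by
  have h1 : HasDerivAt (fun y : ℝ => (y + 1) * Real.log y)
      (1 * Real.log x + (x + 1) * x⁻¹) x :=
    ((hasDerivAt_id x).add_const 1).mul (Real.hasDerivAt_log hx.ne')
  have h2 : HasDerivAt (fun y : ℝ => 2 * (y - 1)) 2 x := by
    simpa using ((hasDerivAt_id x).sub_const 1).const_mul 2
  have h := h1.sub h2; rw [one_mul] at h; exact h

private lemma Gfun_mono : MonotoneOn Gfun (Set.Ioi (0 : ℝ)) := by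
  refine monotoneOn_of_deriv_nonneg (convex_Ioi 0) ?_ ?_ ?_
  · refine ContinuousOn.sub (ContinuousOn.mul (by fun_prop) ?_) (by fun_prop)
    exact Real.continuousOn_log.mono (fun x hx => ne_of_gt hx)
  · rw [interior_Ioi]
    exact fun x hx => (Gfun_hasDeriv hx).differentiableAt.differentiableWithinAt
  · rw [interior_Ioi]
    intro x hx
    rw [(Gfun_hasDeriv hx).deriv]
    have h1 : Real.log x⁻¹ ≤ x⁻¹ - 1 := Real.log_le_sub_one_of_pos (inv_pos.2 hx)
    rw [Real.log_inv] at h1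
    have hxi : x * x⁻¹ = 1 := mul_inv_cancel₀ hx.ne'
    nlinarith

private noncomputable def Ffun (x : ℝ) : ℝ :=
  (2 * x + 4) * (x * Real.log x - x + 1) - 3 * (x - 1) ^ 2

private lemma Ffun_hasDeriv {x : ℝ} (hx : 0 < x) :
    HasDerivAt Ffun (4 * Gfun x) x := by
  have h1 : HasDerivAt (fun y : ℝ => 2 * y + 4) 2 x := by
    simpa using ((hasDerivAt_id x).const_mul 2).add_const 4
  have h2 : HasDerivAt (fun y : ℝ => y * Real.log y - y + 1) (Real.log x) x := by
    simpa using ((Real.hasDerivAt_mul_log hx.ne').sub (hasDerivAt_id x)).add_const 1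
  have h3 : HasDerivAt (fun y : ℝ => 3 * (y - 1) ^ 2) (3 * (2 * (x - 1))) x := by
    have := (((hasDerivAt_id x).sub_const 1).pow 2).const_mul 3
    simpa using this
  have h : HasDerivAt Ffun _ x := (h1.mul h2).sub h3
  convert h using 1
  simp only [Gfun]
  ring

private lemma Ffun_nonneg {x : ℝ} (hx : 0 ≤ x) : 0 ≤ Ffun x := by
  have hF1 : Ffun 1 = 0 := by simp [Ffun]
  have hcont : Continuous Ffun := by
    unfold Ffun
    have := Real.continuous_mul_log
    fun_prop
  rcases le_or_gt 1 x with h | h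
  · have hmono : MonotoneOn Ffun (Set.Ici (1 : ℝ)) := by
      refine monotoneOn_of_deriv_nonneg (convex_Ici 1) hcont.continuousOn ?_ ?_
      · rw [interior_Ici]
        exact fun y hy => (Ffun_hasDeriv (lt_trans one_pos hy)).differentiableAt.differentiableWithinAt
      · rw [interior_Ici]
        intro y hy
        rw [(Ffun_hasDeriv (lt_trans one_pos hy)).deriv]
        have : Gfun 1 ≤ Gfun y :=
          Gfun_mono (Set.mem_Ioi.2 one_pos) (Set.mem_Ioi.2 (lt_trans one_pos hy)) (le_of_lt hy)
        have hG1 : Gfun 1 = 0 := by simp [Gfun]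
        linarith
    have := hmono (Set.mem_Ici.2 le_rfl) (Set.mem_Ici.2 h) h
    linarith
  · have hanti : AntitoneOn Ffun (Set.Icc (0 : ℝ) 1) := by
      refine antitoneOn_of_deriv_nonpos (convex_Icc 0 1) hcont.continuousOn ?_ ?_
      · rw [interior_Icc]
        exact fun y hy => (Ffun_hasDeriv hy.1).differentiableAt.differentiableWithinAt
      · rw [interior_Icc]
        intro y hy
        rw [(Ffun_hasDeriv hy.1).deriv]
        have : Gfun y ≤ Gfun 1 :=
          Gfun_mono (Set.mem_Ioi.2 hy.1) (Set.mem_Ioi.2 one_pos) (le_of_lt hy.2)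
        have hG1 : Gfun 1 = 0 := by simp [Gfun]
        linarith
    have := hanti (Set.mem_Icc.2 ⟨hx, le_of_lt h⟩) (Set.mem_Icc.2 ⟨zero_le_one, le_rfl⟩) (le_of_lt h)
    linarith

lemma pinsker_pointwise {x : ℝ} (hx : 0 ≤ x) :
    3 * (x - 1) ^ 2 ≤ (2 * x + 4) * (x * Real.log x - x + 1) := by
  have := Ffun_nonneg hx
  simp only [Ffun] at this
  linarith

variable {Ω : Type*} [MeasurableSpace Ω]

lemma pinsker_integral (μ ν : Measure Ω) [IsProbabilityMeasure μ] [IsProbabilityMeasure ν]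
    (hμν : μ ≪ ν) (hint : Integrable (llr μ ν) μ) :
    (∫ x, |(μ.rnDeriv ν x).toReal - 1| ∂ν) ^ 2 ≤ 2 * ∫ x, llr μ ν x ∂μ := by
  set ρ : Ω → ℝ := fun x => (μ.rnDeriv ν x).toReal with hρ
  have hρmeas : Measurable ρ := (Measure.measurable_rnDeriv μ ν).ennreal_toReal
  have hρ0 : ∀ x, 0 ≤ ρ x := fun x => ENNReal.toReal_nonneg
  have hρint : Integrable ρ ν := Measure.integrable_toReal_rnDeriv
  have hρ1 : ∫ x, ρ x ∂ν = 1 := by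
    rw [Measure.integral_toReal_rnDeriv hμν]; simp
  -- ρ log ρ
  have hKint : Integrable (fun x => ρ x * Real.log (ρ x)) ν := by
    have := (integrable_rnDeriv_smul_iff hμν).mpr hint
    simpa [llr_def, smul_eq_mul] using this
  have hKL : ∫ x, ρ x * Real.log (ρ x) ∂ν = ∫ x, llr μ ν x ∂μ := by
    have := integral_rnDeriv_smul hμν (f := llr μ ν)
    simpa [llr_def, smul_eq_mul] using this
  set φ : Ω → ℝ := fun x => ρ x * Real.log (ρ x) - ρ x + 1 with hφ
  have hφmeas : Measurable φ :=
    ((hρmeas.mul (Real.measurable_log.comp hρmeas)).sub hρmeas).add measurable_const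
  have hφ0 : ∀ x, 0 ≤ φ x := fun x => aux_phi_nonneg (hρ0 x)
  have hφint : Integrable φ ν := (hKint.sub hρint).add (integrable_const 1)
  set K := ∫ x, llr μ ν x ∂μ with hK
  have hsubint : Integrable (fun x => ρ x * Real.log (ρ x) - ρ x) ν := hKint.sub hρint
  have hφeq : ∫ x, φ x ∂ν = K := by
    have h1 : ∫ x, φ x ∂ν = ∫ x, (ρ x * Real.log (ρ x) - ρ x) + 1 ∂ν := rfl
    rw [h1, integral_add hsubint (integrable_const 1), integral_sub hKint hρint, hρ1, hKL]
    simp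
  have hKnn : 0 ≤ K := by
    rw [← hφeq]; exact integral_nonneg hφ0
  -- Cauchy-Schwarz setup
  set f : Ω → ℝ := fun x => Real.sqrt ((2 * ρ x + 4) / 3) with hf
  set g : Ω → ℝ := fun x => Real.sqrt (φ x) with hg
  have hfsq : ∀ x, f x ^ 2 = (2 * ρ x + 4) / 3 := fun x =>
    Real.sq_sqrt (by positivity)
  have hgsq : ∀ x, g x ^ 2 = φ x := fun x => Real.sq_sqrt (hφ0 x)
  have hfmeas : Measurable f := (((hρmeas.const_mul 2).add_const 4).div_const 3).sqrt
  have hgmeas : Measurable g := hφmeas.sqrt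
  have hfsqint : Integrable (fun x => f x ^ 2) ν := by
    simp only [hfsq]
    exact ((hρint.const_mul 2).add (integrable_const 4)).div_const 3
  have hgsqint : Integrable (fun x => g x ^ 2) ν := by
    simp only [hgsq]; exact hφint
  have hfmem : MemLp f 2 ν := (memLp_two_iff_integrable_sq hfmeas.aestronglyMeasurable).2 hfsqint
  have hgmem : MemLp g 2 ν := (memLp_two_iff_integrable_sq hgmeas.aestronglyMeasurable).2 hgsqint
  have hbint : Integrable (fun x => (f x ^ 2 + g x ^ 2) / 2) ν :=
    (hfsqint.add hgsqint).div_const 2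
  have hfgint : Integrable (fun x => f x * g x) ν := by
    refine Integrable.mono' hbint
      (hfmeas.mul hgmeas).aestronglyMeasurable (Filter.Eventually.of_forall fun x => ?_)
    have h1 : 0 ≤ f x := Real.sqrt_nonneg _
    have h2 : 0 ≤ g x := Real.sqrt_nonneg _
    rw [Real.norm_of_nonneg (mul_nonneg h1 h2)]
    nlinarith [sq_nonneg (f x - g x)]
  -- pointwise |ρ - 1| ≤ f * g
  have hpw : ∀ x, |ρ x - 1| ≤ f x * g x := by
    intro x
    have h := pinsker_pointwise (hρ0 x)
    have h2 : (ρ x - 1) ^ 2 ≤ (2 * ρ x + 4) / 3 * φ x := by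
      rw [hφ]; dsimp only; nlinarith
    calc |ρ x - 1| = Real.sqrt ((ρ x - 1) ^ 2) := (Real.sqrt_sq_eq_abs _).symm
      _ ≤ Real.sqrt ((2 * ρ x + 4) / 3 * φ x) := Real.sqrt_le_sqrt h2
      _ = f x * g x := by rw [Real.sqrt_mul (by positivity)]
  have habsint : Integrable (fun x => |ρ x - 1|) ν := (hρint.sub (integrable_const 1)).abs
  have hA1 : ∫ x, |ρ x - 1| ∂ν ≤ ∫ x, f x * g x ∂ν :=
    integral_mono habsint hfgint hpw
  -- Hölder
  have hpq : Real.HolderConjugate 2 2 := Real.HolderConjugate.two_two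
  have hCS := integral_mul_le_Lp_mul_Lq_of_nonneg (μ := ν) (f := f) (g := g) hpq
    (Filter.Eventually.of_forall fun x => Real.sqrt_nonneg _)
    (Filter.Eventually.of_forall fun x => Real.sqrt_nonneg _)
    (by rwa [ENNReal.ofReal_ofNat]) (by rwa [ENNReal.ofReal_ofNat])
  simp only [Real.rpow_two] at hCS
  have hintf : ∫ x, f x ^ 2 ∂ν = 2 := by
    simp only [hfsq]
    rw [integral_div, integral_add (hρint.const_mul 2) (integrable_const 4),
      integral_const_mul, hρ1]
    simp; norm_num
  have hintg : ∫ x, g x ^ 2 ∂ν = K := by simp only [hgsq]; exact hφeq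
  rw [hintf, hintg] at hCS
  have hsqrt2 : (2:ℝ) ^ (1/(2:ℝ)) = Real.sqrt 2 := (Real.sqrt_eq_rpow 2).symm
  have hsqrtK : K ^ (1/(2:ℝ)) = Real.sqrt K := (Real.sqrt_eq_rpow K).symm
  rw [hsqrt2, hsqrtK] at hCS
  have hA : ∫ x, |ρ x - 1| ∂ν ≤ Real.sqrt 2 * Real.sqrt K := le_trans hA1 hCS
  have hAnn : 0 ≤ ∫ x, |ρ x - 1| ∂ν := integral_nonneg fun x => abs_nonneg _
  have h2 : Real.sqrt 2 ^ 2 = 2 := Real.sq_sqrt (by norm_num)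
  have h3 : Real.sqrt K ^ 2 = K := Real.sq_sqrt hKnn
  nlinarith [Real.sqrt_nonneg (2:ℝ), Real.sqrt_nonneg K]

lemma meandev_aux (μ ν : Measure ℝ) [IsProbabilityMeasure μ] [IsProbabilityMeasure ν]
    (hμν : μ ≪ ν) (hνs : ∀ᵐ x ∂ν, x ∈ Set.Icc (0:ℝ) 1) :
    |(∫ x, x ∂μ) - ∫ x, x ∂ν| ≤ 2⁻¹ * ∫ x, |(μ.rnDeriv ν x).toReal - 1| ∂ν := by
  set ρ : ℝ → ℝ := fun x => (μ.rnDeriv ν x).toReal with hρ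
  have hρ0 : ∀ x, 0 ≤ ρ x := fun x => ENNReal.toReal_nonneg
  have hρint : Integrable ρ ν := Measure.integrable_toReal_rnDeriv
  have hρ1 : ∫ x, ρ x ∂ν = 1 := by
    rw [Measure.integral_toReal_rnDeriv hμν]; simp
  have hμs : ∀ᵐ x ∂μ, x ∈ Set.Icc (0:ℝ) 1 := hμν.ae_le hνs
  have hidμ : Integrable (fun x => x) μ := by
    refine Integrable.mono' (integrable_const 1) measurable_id.aestronglyMeasurable ?_
    filter_upwards [hμs] with x hx
    rw [Real.norm_eq_abs, abs_le]; exact ⟨by linarith [hx.1], hx.2⟩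
  have hidν : Integrable (fun x => x) ν := by
    refine Integrable.mono' (integrable_const 1) measurable_id.aestronglyMeasurable ?_
    filter_upwards [hνs] with x hx
    rw [Real.norm_eq_abs, abs_le]; exact ⟨by linarith [hx.1], hx.2⟩
  have hρidint : Integrable (fun x => ρ x * x) ν := by
    have := (integrable_rnDeriv_smul_iff hμν (f := fun x => x)).mpr hidμ
    simpa [smul_eq_mul] using this
  have hd : ∫ x, x ∂μ = ∫ x, ρ x * x ∂ν := by
    have := integral_rnDeriv_smul hμν (f := fun x : ℝ => x)
    simpa [smul_eq_mul] using this.symm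
  have hdiff : (∫ x, x ∂μ) - ∫ x, x ∂ν = ∫ x, (ρ x * x - x) ∂ν := by
    rw [hd, ← integral_sub hρidint hidν]
  -- positive parts
  have hsubint : Integrable (fun x => ρ x - 1) ν := hρint.sub (integrable_const 1)
  have hsub0 : ∫ x, (ρ x - 1) ∂ν = 0 := by
    rw [integral_sub hρint (integrable_const 1), hρ1]; simp
  have hposint : Integrable (fun x => max (ρ x - 1) 0) ν := hsubint.pos_part
  have hnegint : Integrable (fun x => max (1 - ρ x) 0) ν := by
    have : Integrable (fun x => 1 - ρ x) ν := (integrable_const 1).sub hρint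
    exact this.pos_part
  have habsint : Integrable (fun x => |ρ x - 1|) ν := hsubint.abs
  have he1 : ∫ x, max (ρ x - 1) 0 ∂ν - ∫ x, max (1 - ρ x) 0 ∂ν = 0 := by
    rw [← integral_sub hposint hnegint]
    rw [show (fun x => max (ρ x - 1) 0 - max (1 - ρ x) 0) = fun x => ρ x - 1 by
      funext x; rcases le_total (ρ x) 1 with h | h
      · rw [max_eq_right (by linarith), max_eq_left (by linarith)]; ring
      · rw [max_eq_left (by linarith), max_eq_right (by linarith)]; ring]
    exact hsub0
  have he2 : ∫ x, max (ρ x - 1) 0 ∂ν + ∫ x, max (1 - ρ x) 0 ∂ν = ∫ x, |ρ x - 1| ∂ν := by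
    rw [← integral_add hposint hnegint]
    congr 1; funext x
    rcases le_total (ρ x) 1 with h | h
    · rw [max_eq_right (by linarith), max_eq_left (by linarith), abs_of_nonpos (by linarith)]; ring
    · rw [max_eq_left (by linarith), max_eq_right (by linarith), abs_of_nonneg (by linarith)]; ring
  have hub : ∫ x, (ρ x * x - x) ∂ν ≤ ∫ x, max (ρ x - 1) 0 ∂ν := by
    refine integral_mono_ae (hρidint.sub hidν) hposint ?_
    filter_upwards [hνs] with x hx
    have h1 : ρ x * x - x = x * (ρ x - 1) := by ring
    rw [h1]
    rcases le_total (ρ x) 1 with h | h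
    · have : x * (ρ x - 1) ≤ 0 := mul_nonpos_of_nonneg_of_nonpos hx.1 (by linarith)
      exact le_trans this (le_max_right _ _)
    · have : x * (ρ x - 1) ≤ 1 * (ρ x - 1) := mul_le_mul_of_nonneg_right hx.2 (by linarith)
      rw [one_mul] at this
      exact le_trans this (le_max_left _ _)
  have hlb : ∫ x, (x - ρ x * x) ∂ν ≤ ∫ x, max (1 - ρ x) 0 ∂ν := by
    refine integral_mono_ae (hidν.sub hρidint) hnegint ?_
    filter_upwards [hνs] with x hx
    have h1 : x - ρ x * x = x * (1 - ρ x) := by ring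
    rw [h1]
    rcases le_total (ρ x) 1 with h | h
    · have : x * (1 - ρ x) ≤ 1 * (1 - ρ x) := mul_le_mul_of_nonneg_right hx.2 (by linarith)
      rw [one_mul] at this
      exact le_trans this (le_max_left _ _)
    · have : x * (1 - ρ x) ≤ 0 := mul_nonpos_of_nonneg_of_nonpos hx.1 (by linarith)
      exact le_trans this (le_max_right _ _)
  have hlb' : -((∫ x, x ∂μ) - ∫ x, x ∂ν) ≤ ∫ x, max (1 - ρ x) 0 ∂ν := by
    rw [hdiff, ← integral_neg]
    refine le_trans (le_of_eq ?_) hlb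
    congr 1; funext x; ring
  rw [abs_le]
  constructor
  · linarith [hlb', he1, he2]
  · rw [hdiff]; linarith [hub, he1, he2]


lemma core_ineq (μ ν : Measure ℝ) [IsProbabilityMeasure μ] [IsProbabilityMeasure ν]
    (hμν : μ ≪ ν) (hνs : ∀ᵐ x ∂ν, x ∈ Set.Icc (0:ℝ) 1)
    (hint : Integrable (llr μ ν) μ) :
    ((∫ x, x ∂μ) - ∫ x, x ∂ν) ^ 2 ≤ 2⁻¹ * ∫ x, llr μ ν x ∂μ := by
  have h1 := meandev_aux μ ν hμν hνs
  have h2 := pinsker_integral μ ν hμν hint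
  set d := (∫ x, x ∂μ) - ∫ x, x ∂ν with hdd
  set A := ∫ x, |(μ.rnDeriv ν x).toReal - 1| ∂ν with hAA
  have hA0' : 0 ≤ A := by
    rw [hAA]; exact integral_nonneg fun x => abs_nonneg _
  clear_value d A
  have hA0 : 0 ≤ A := hA0'
  have hd : d ^ 2 = |d| ^ 2 := (sq_abs d).symm
  have h3 : |d| ^ 2 ≤ (2⁻¹ * A) ^ 2 := pow_le_pow_left₀ (abs_nonneg d) h1 2
  have h4 : (2⁻¹ * A) ^ 2 = A ^ 2 / 4 := by ring
  linarith

/-- For a mixture `Q = ∑ i, wᵢ Pᵢ` of probability measures on `ℝ` supported on `[0,1]`,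
with means `mᵢ = ∫ x dPᵢ` and `m̄ = ∫ x dQ`, the variance of the conditional mean is at most
half the mean KL divergence: `∑ i, wᵢ (mᵢ − m̄)² ≤ (1/2) ∑ i, wᵢ KL(Pᵢ ‖ Q)`. -/
theorem sum_sq_mean_dev_le_half_sum_klDiv {n : ℕ} (hn : 0 < n)
    (w : Fin n → ℝ) (hw0 : ∀ i, 0 ≤ w i) (hw1 : ∑ i, w i = 1)
    (P : Fin n → Measure ℝ) [∀ i, IsProbabilityMeasure (P i)]
    (hsupp : ∀ i, P i (Set.Icc (0 : ℝ) 1) = 1)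
    (Q : Measure ℝ) (hQ : Q = ∑ i, ENNReal.ofReal (w i) • P i) :
    ENNReal.ofReal (∑ i, w i * ((∫ x, x ∂(P i)) - ∫ x, x ∂Q) ^ 2) ≤
      2⁻¹ * ∑ i, ENNReal.ofReal (w i) * klDiv (P i) Q := by
  have hQapply : ∀ s : Set ℝ, Q s = ∑ i, ENNReal.ofReal (w i) * P i s := by
    intro s
    rw [hQ, Measure.finset_sum_apply]
    simp [Measure.smul_apply, smul_eq_mul]
  haveI hQprob : IsProbabilityMeasure Q := by
    constructor
    rw [hQapply]
    simp only [measure_univ, mul_one]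
    rw [← ENNReal.ofReal_sum_of_nonneg (fun i _ => hw0 i), hw1, ENNReal.ofReal_one]
  have hQicc : Q (Set.Icc (0:ℝ) 1) = 1 := by
    rw [hQapply]
    simp only [hsupp, mul_one]
    rw [← ENNReal.ofReal_sum_of_nonneg (fun i _ => hw0 i), hw1, ENNReal.ofReal_one]
  have hae : ∀ᵐ x ∂Q, x ∈ Set.Icc (0:ℝ) 1 := by
    rw [ae_iff]
    have : {a : ℝ | ¬ a ∈ Set.Icc (0:ℝ) 1} = (Set.Icc (0:ℝ) 1)ᶜ := rfl
    rw [this, measure_compl measurableSet_Icc (measure_ne_top _ _), hQicc]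
    simp
  have hac : ∀ i, 0 < w i → P i ≪ Q := by
    intro i hwi s hs
    have h0 : Q s = 0 := hs
    rw [hQapply] at h0
    have := (Finset.sum_eq_zero_iff.1 h0) i (Finset.mem_univ i)
    rcases mul_eq_zero.1 this with h | h
    · exact absurd h (by simp [ENNReal.ofReal_eq_zero]; linarith)
    · exact h
  -- termwise bound
  have hterm : ∀ i : Fin n,
      ENNReal.ofReal (w i * ((∫ x, x ∂(P i)) - ∫ x, x ∂Q) ^ 2) ≤
        2⁻¹ * (ENNReal.ofReal (w i) * klDiv (P i) Q) := by
    intro i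
    rcases eq_or_lt_of_le (hw0 i) with h0 | hwi
    · simp [← h0]
    by_cases hcase : Integrable (llr (P i) Q) (P i)
    · have hKineq := core_ineq (P i) Q (hac i hwi) hae hcase
      set K := ∫ x, llr (P i) Q x ∂(P i) with hK
      have hKnn : 0 ≤ K := by nlinarith [sq_nonneg ((∫ x, x ∂(P i)) - ∫ x, x ∂Q)]
      have hkl : klDiv (P i) Q = ENNReal.ofReal K := by
        rw [klDiv, if_pos ⟨hac i hwi, hcase⟩]
      rw [hkl, ← ENNReal.ofReal_mul (hw0 i)]
      have h2 : (2 : ℝ≥0∞)⁻¹ = ENNReal.ofReal 2⁻¹ := by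
        rw [ENNReal.ofReal_inv_of_pos (by norm_num), ENNReal.ofReal_ofNat]
      rw [h2, ← ENNReal.ofReal_mul (by norm_num)]
      apply ENNReal.ofReal_le_ofReal
      calc w i * ((∫ x, x ∂(P i)) - ∫ x, x ∂Q) ^ 2
          ≤ w i * (2⁻¹ * K) := mul_le_mul_of_nonneg_left hKineq (hw0 i)
        _ = 2⁻¹ * (w i * K) := by ring
    · have hkl : klDiv (P i) Q = ⊤ := by
        rw [klDiv, if_neg (fun h => hcase h.2)]
      rw [hkl, ENNReal.mul_top (by simp [ENNReal.ofReal_eq_zero]; linarith),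
        ENNReal.mul_top (by norm_num)]
      exact le_top
  calc ENNReal.ofReal (∑ i, w i * ((∫ x, x ∂(P i)) - ∫ x, x ∂Q) ^ 2)
      = ∑ i, ENNReal.ofReal (w i * ((∫ x, x ∂(P i)) - ∫ x, x ∂Q) ^ 2) :=
        ENNReal.ofReal_sum_of_nonneg fun i _ => mul_nonneg (hw0 i) (sq_nonneg _)
    _ ≤ ∑ i, 2⁻¹ * (ENNReal.ofReal (w i) * klDiv (P i) Q) :=
        Finset.sum_le_sum fun i _ => hterm i
    _ = 2⁻¹ * ∑ i, ENNReal.ofReal (w i) * klDiv (P i) Q := (Finset.mul_sum _ _ _).symm
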